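/- Let Γ be a group, X a set, α an action of Γ on X, and Sym_f(X) the group of finitely supported permutations of X, on which Γ acts by α̂(g)(σ) = α(g)·σ·α(g)⁻¹. The symmetric enrichment S(Γ,X) = Sym_f(X) ⋊_α̂ Γ is residually finite if and only if Γ is residually finite and X is finite. -/

import Mathlib

/-- The subgroup `Sym_f(X)` of finitely supported permutations of a set `X`. -/
def symF (X : Type*) : Subgroup (Equiv.Perm X) where
  carrier := {σ | {x | σ x ≠ x}.Finite}
  one_mem' := by
    show {x : X | (1 : Equiv.Perm X) x ≠ x}.Finite
    have h : {x : X | (1 : Equiv.Perm X) x ≠ x} = ∅ := by ext x; simp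
    rw [h]; exact Set.finite_empty
  mul_mem' := by
    intro a b ha hb
    show {x | (a * b) x ≠ x}.Finite
    apply (ha.union hb).subset
    intro x hx
    simp only [Set.mem_setOf_eq, Set.mem_union, Equiv.Perm.coe_mul, Function.comp_apply] at hx ⊢
    by_contra hcon
    push_neg at hcon
    exact hx (by rw [hcon.2, hcon.1])
  inv_mem' := by
    intro a ha
    show {x | a⁻¹ x ≠ x}.Finite
    apply ha.subset
    intro x hx
    simp only [Set.mem_setOf_eq] at hx ⊢
    intro h
    exact hx (by nth_rewrite 1 [← h]; simp)

lemma conj_mem_symF {X : Type*} (ρ : Equiv.Perm X) {σ : Equiv.Perm X} (hσ : σ ∈ symF X) :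
    ρ * σ * ρ⁻¹ ∈ symF X := by
  apply (hσ.image ρ).subset
  intro x hx
  simp only [Set.mem_setOf_eq, Equiv.Perm.coe_mul, Function.comp_apply] at hx
  refine ⟨ρ⁻¹ x, ?_, by simp⟩
  simp only [Set.mem_setOf_eq]
  intro h
  exact hx (by rw [h]; simp)

/-- Conjugation action of `Sym(X)` on the subgroup of finitely supported permutations. -/
def conjAutF {X : Type*} : Equiv.Perm X →* MulAut (symF X) where
  toFun ρ :=
    { toFun := fun σ => ⟨ρ * σ * ρ⁻¹, conj_mem_symF ρ σ.2⟩
      invFun := fun σ => ⟨ρ⁻¹ * σ * ρ, by simpa using conj_mem_symF ρ⁻¹ σ.2⟩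
      left_inv := fun σ => by ext; simp [mul_assoc]
      right_inv := fun σ => by ext; simp [mul_assoc]
      map_mul' := fun a b => by ext; simp [mul_assoc] }
  map_one' := by ext σ; simp
  map_mul' := fun ρ₁ ρ₂ => by ext σ; simp [mul_assoc]

/-- A group is residually finite if every nontrivial element survives in some finite
quotient. -/
def ResiduallyFinite (G : Type*) [Group G] : Prop :=
  ∀ g : G, g ≠ 1 → ∃ (Q : Type) (_ : Group Q) (_ : Finite Q) (f : G →* Q), f g ≠ 1

namespace Stmt16Aux
variable {X : Type*} [DecidableEq X]

def cyc (a b c : X) : Equiv.Perm X := Equiv.swap a b * Equiv.swap b c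

lemma cyc_apply_of_ne {a b c x : X} (h1 : x ≠ a) (h2 : x ≠ b) (h3 : x ≠ c) :
    cyc a b c x = x := by
  simp [cyc, Equiv.swap_apply_of_ne_of_ne, h1, h2, h3]

lemma cyc_apply_fst {a b c : X} (hab : a ≠ b) (hac : a ≠ c) : cyc a b c a = b := by
  simp [cyc, Equiv.swap_apply_of_ne_of_ne hab hac]

lemma cyc_ne_one {a b c : X} (hab : a ≠ b) (hac : a ≠ c) : cyc a b c ≠ 1 := by
  intro h
  have h2 := cyc_apply_fst hab hac
  rw [h] at h2
  exact hab h2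

lemma cyc_conj (ρ : Equiv.Perm X) (a b c : X) :
    ρ * cyc a b c * ρ⁻¹ = cyc (ρ a) (ρ b) (ρ c) := by
  rw [cyc, cyc, Equiv.swap_apply_apply, Equiv.swap_apply_apply]
  group

lemma cyc_mul_cyc {a b c : X} (hab : a ≠ b) (hac : a ≠ c) (hbc : b ≠ c) :
    cyc a b c * cyc a c b = 1 := by
  ext x
  simp only [cyc, Equiv.Perm.mul_apply, Equiv.Perm.one_apply, Equiv.swap_apply_def]
  split_ifs <;> simp_all

lemma cyc_inv {a b c : X} (hab : a ≠ b) (hac : a ≠ c) (hbc : b ≠ c) :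
    (cyc a b c)⁻¹ = cyc a c b :=
  inv_eq_of_mul_eq_one_left (cyc_mul_cyc hac hab hbc.symm)

lemma cyc_sq {a b c : X} (hab : a ≠ b) (hac : a ≠ c) (hbc : b ≠ c) :
    cyc a b c * cyc a b c = cyc a c b := by
  ext x
  simp only [cyc, Equiv.Perm.mul_apply, Equiv.swap_apply_def]
  split_ifs <;> simp_all

lemma cyc_inv_mul_inv {a b c : X} (hab : a ≠ b) (hac : a ≠ c) (hbc : b ≠ c) :
    (cyc a b c)⁻¹ * (cyc a b c)⁻¹ = cyc a b c := by
  rw [cyc_inv hab hac hbc, cyc_sq hac hab hbc.symm]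


lemma swap_mem_symF (a b : X) : Equiv.swap a b ∈ symF X := by
  show {x | Equiv.swap a b x ≠ x}.Finite
  apply Set.Finite.subset (Set.Finite.insert a (Set.finite_singleton b))
  intro x hx
  simp only [Set.mem_setOf_eq] at hx
  by_contra h
  simp only [Set.mem_insert_iff, Set.mem_singleton_iff, not_or] at h
  exact hx (Equiv.swap_apply_of_ne_of_ne h.1 h.2)

lemma cyc_mem_symF (a b c : X) : cyc a b c ∈ symF X :=
  mul_mem (swap_mem_symF a b) (swap_mem_symF b c)

def prodUpTo {G : Type*} [Monoid G] (f : ℕ → G) : ℕ → G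
  | 0 => 1
  | n + 1 => prodUpTo f n * f n

lemma symF_cycle_killed (e : ℕ → X) (he : Function.Injective e)
    {Q : Type} [Group Q] [Finite Q] (g : symF X →* Q) :
    g ⟨cyc (e 0) (e 1) (e 2), cyc_mem_symF _ _ _⟩ = 1 := by
  have hne : ∀ {i j : ℕ}, i ≠ j → e i ≠ e j := fun h hh => h (he hh)
  set Cp : ℕ → Equiv.Perm X := fun i => cyc (e (3 * i)) (e (3 * i + 1)) (e (3 * i + 2))
    with hCp
  set Cc : ℕ → (symF X : Subgroup (Equiv.Perm X)) :=
    fun i => ⟨Cp i, cyc_mem_symF _ _ _⟩ with hCc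
  -- it suffices to kill some Cc n
  suffices h : ∃ n, g (Cc n) = 1 by
    obtain ⟨n, hn⟩ := h
    have h0 : (⟨cyc (e 0) (e 1) (e 2), cyc_mem_symF _ _ _⟩ :
        (symF X : Subgroup (Equiv.Perm X))) = Cc 0 := by
      apply Subtype.ext; simp [hCc, hCp]
    rw [h0]
    by_cases hn0 : n = 0
    · rwa [hn0] at hn
    · -- conjugate Cc n to Cc 0
      set ρ : Equiv.Perm X := Equiv.swap (e (3 * n)) (e 0) *
        (Equiv.swap (e (3 * n + 1)) (e 1) * Equiv.swap (e (3 * n + 2)) (e 2)) with hρ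
      have hρmem : ρ ∈ symF X :=
        mul_mem (swap_mem_symF _ _) (mul_mem (swap_mem_symF _ _) (swap_mem_symF _ _))
      set π : (symF X : Subgroup (Equiv.Perm X)) := ⟨ρ, hρmem⟩ with hπ
      have key : π * Cc n * π⁻¹ = Cc 0 := by
        apply Subtype.ext
        push_cast
        rw [cyc_conj]
        have e1 : ρ (e (3 * n)) = e 0 := by
          rw [hρ]
          simp only [Equiv.Perm.mul_apply]
          rw [Equiv.swap_apply_of_ne_of_ne (hne (by omega)) (hne (by omega)),
            Equiv.swap_apply_of_ne_of_ne (hne (by omega)) (hne (by omega)),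
            Equiv.swap_apply_left]
        have e2 : ρ (e (3 * n + 1)) = e 1 := by
          rw [hρ]
          simp only [Equiv.Perm.mul_apply]
          rw [Equiv.swap_apply_of_ne_of_ne (hne (by omega)) (hne (by omega)),
            Equiv.swap_apply_left,
            Equiv.swap_apply_of_ne_of_ne (hne (by omega)) (hne (by omega))]
        have e3 : ρ (e (3 * n + 2)) = e 2 := by
          rw [hρ]
          simp only [Equiv.Perm.mul_apply]
          rw [Equiv.swap_apply_left,
            Equiv.swap_apply_of_ne_of_ne (hne (by omega)) (hne (by omega)),
            Equiv.swap_apply_of_ne_of_ne (hne (by omega)) (hne (by omega))]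
        rw [e1, e2, e3]
      calc g (Cc 0) = g (π * Cc n * π⁻¹) := by rw [key]
        _ = g π * g (Cc n) * (g π)⁻¹ := by simp [map_mul]
        _ = 1 := by rw [hn]; group
  -- pigeonhole
  set P : ℕ → (symF X : Subgroup (Equiv.Perm X)) := prodUpTo Cc with hP
  obtain ⟨n', m', hnm', heq'⟩ := Finite.exists_ne_map_eq_of_infinite (fun k => g (P k))
  -- wlog n < m
  obtain ⟨n, m, hlt, heq⟩ : ∃ n m, n < m ∧ g (P n) = g (P m) := by
    rcases hnm'.lt_or_gt with h | h
    · exact ⟨n', m', h, heq'⟩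
    · exact ⟨m', n', h, heq'.symm⟩
  refine ⟨n, ?_⟩
  set π : (symF X : Subgroup (Equiv.Perm X)) :=
    ⟨Equiv.swap (e (3 * n + 1)) (e (3 * n + 2)), swap_mem_symF _ _⟩ with hπ
  have hcommC : ∀ j, j ≠ n → Commute π (Cc j) := by
    intro j hj
    have hd : Equiv.Perm.Disjoint (Equiv.swap (e (3 * n + 1)) (e (3 * n + 2))) (Cp j) := by
      intro x
      by_cases hx : x ≠ e (3 * n + 1) ∧ x ≠ e (3 * n + 2)
      · exact Or.inl (Equiv.swap_apply_of_ne_of_ne hx.1 hx.2)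
      · push_neg at hx
        right
        rcases em (x = e (3 * n + 1)) with h | h
        · subst h
          exact cyc_apply_of_ne (hne (by omega)) (hne (by omega)) (hne (by omega))
        · have h2 := hx h
          subst h2
          exact cyc_apply_of_ne (hne (by omega)) (hne (by omega)) (hne (by omega))
    have := hd.commute
    unfold Commute SemiconjBy at this ⊢
    apply Subtype.ext
    push_cast
    exact this
  have hcommS : ∀ k, n + 1 ≤ k → Commute π ((P (n + 1))⁻¹ * P k) := by
    intro k hk
    induction k with
    | zero => omega
    | succ k ih =>
      rcases Nat.lt_or_ge (n + 1) (k + 1) with h | h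
      · have hk' : n + 1 ≤ k := by omega
        have : (P (n + 1))⁻¹ * P (k + 1) = ((P (n + 1))⁻¹ * P k) * Cc k := by
          show (P (n + 1))⁻¹ * (P k * Cc k) = _
          group
        rw [this]
        exact (ih hk').mul_right (hcommC k (by omega))
      · have : n + 1 = k + 1 := by omega
        rw [← this]
        simp [Commute, SemiconjBy]
  -- the key identity
  have hu : g ((P n)⁻¹ * P m) = 1 := by
    rw [map_mul, map_inv, heq]
    group
  have hsplit : (P n)⁻¹ * P m = Cc n * ((P (n + 1))⁻¹ * P m) := by
    show (P n)⁻¹ * P m = Cc n * ((P n * Cc n)⁻¹ * P m)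
    group
  have hconj : π * Cc n * π⁻¹ = (Cc n)⁻¹ := by
    apply Subtype.ext
    push_cast
    simp only [hCc, hCp, hπ]
    rw [cyc_conj]
    rw [Equiv.swap_apply_of_ne_of_ne (hne (by omega)) (hne (by omega)),
      Equiv.swap_apply_left, Equiv.swap_apply_right]
    exact (cyc_inv (hne (by omega)) (hne (by omega)) (hne (by omega))).symm
  have hCcsq : (Cc n)⁻¹ * (Cc n)⁻¹ = Cc n := by
    apply Subtype.ext
    push_cast
    exact cyc_inv_mul_inv (hne (by omega)) (hne (by omega)) (hne (by omega))
  have hkey : π * ((P n)⁻¹ * P m) * π⁻¹ * ((P n)⁻¹ * P m)⁻¹ = Cc n := by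
    rw [hsplit]
    have hc := (hcommS m (by omega)).eq
    set s := (P (n + 1))⁻¹ * P m with hs
    calc π * (Cc n * s) * π⁻¹ * (Cc n * s)⁻¹
        = (π * Cc n * π⁻¹) * (π * s * π⁻¹) * (s⁻¹ * (Cc n)⁻¹) := by group
      _ = (Cc n)⁻¹ * (π * s) * π⁻¹ * (s⁻¹ * (Cc n)⁻¹) := by rw [hconj]; group
      _ = (Cc n)⁻¹ * (s * π) * π⁻¹ * (s⁻¹ * (Cc n)⁻¹) := by rw [hc]
      _ = (Cc n)⁻¹ * (Cc n)⁻¹ := by group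
      _ = Cc n := hCcsq
  calc g (Cc n) = g (π * ((P n)⁻¹ * P m) * π⁻¹ * ((P n)⁻¹ * P m)⁻¹) := by rw [hkey]
    _ = g π * g ((P n)⁻¹ * P m) * (g π)⁻¹ * (g ((P n)⁻¹ * P m))⁻¹ := by
        simp [map_mul]
    _ = 1 := by rw [hu]; group

end Stmt16Aux

/-- The symmetric enrichment `S(Γ,X) = Sym_f(X) ⋊ Γ` of an action `α` of `Γ` on `X`
(where `Γ` acts on `Sym_f(X)` by conjugation by `α(g)`) is residually finite iff `Γ` is
residually finite and `X` is finite. -/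
theorem stmt16 {Γ : Type*} [Group Γ] (X : Type*) (α : Γ →* Equiv.Perm X) :
    ResiduallyFinite (symF X ⋊[conjAutF.comp α] Γ) ↔
      (ResiduallyFinite Γ ∧ Finite X) := by
  classical
  constructor
  · intro hRF
    have hX : Finite X := by
      by_contra hfin
      have : Infinite X := not_finite_iff_infinite.mp hfin
      set e := Infinite.natEmbedding X with he
      have hne : (e 0 : X) ≠ e 1 := fun h => absurd (e.injective h) (by omega)
      have hne2 : (e 0 : X) ≠ e 2 := fun h => absurd (e.injective h) (by omega)
      set σ0 : (symF X : Subgroup (Equiv.Perm X)) :=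
        ⟨Stmt16Aux.cyc (e 0) (e 1) (e 2), Stmt16Aux.cyc_mem_symF _ _ _⟩ with hσ0
      obtain ⟨Q, _, _, f, hf⟩ := hRF (SemidirectProduct.inl σ0) (by
        intro h
        have h1 : σ0 = 1 := SemidirectProduct.inl_injective (by rw [h, map_one])
        have h2 : (σ0 : Equiv.Perm X) = 1 := by rw [h1]; rfl
        exact Stmt16Aux.cyc_ne_one hne hne2 h2)
      apply hf
      have hk := Stmt16Aux.symF_cycle_killed (fun n => e n) e.injective
        (f.comp (SemidirectProduct.inl))
      simpa using hk
    refine ⟨?_, hX⟩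
    intro γ hγ
    obtain ⟨Q, _, _, f, hf⟩ := hRF (SemidirectProduct.inr γ)
      (fun h => hγ (SemidirectProduct.inr_injective (by rw [h, map_one])))
    exact ⟨Q, ‹_›, ‹_›, f.comp SemidirectProduct.inr, hf⟩
  · rintro ⟨hΓ, hX⟩ s hs
    by_cases hr : s.right = 1
    · obtain ⟨k, ⟨eqv⟩⟩ := Finite.exists_equiv_fin X
      let φ : (symF X ⋊[conjAutF.comp α] Γ) →* Equiv.Perm X :=
        SemidirectProduct.lift (symF X).subtype α (fun γ => by ext σ; rfl)
      let ψ : Equiv.Perm X →* Equiv.Perm (Fin k) :=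
        { toFun := fun p => (eqv.symm.trans p).trans eqv
          map_one' := by ext x; simp
          map_mul' := fun p q => by ext x; simp }
      refine ⟨Equiv.Perm (Fin k), inferInstance, inferInstance, ψ.comp φ, ?_⟩
      intro h
      apply hs
      have hinj : Function.Injective ψ := by
        intro p q hpq
        ext x
        have := congrArg (fun r => eqv.symm (r (eqv x))) hpq
        simpa [ψ] using this
      have hφ1 : φ s = 1 := hinj (by rw [map_one]; exact h)
      have hφs : φ s = (s.left : Equiv.Perm X) * α s.right := rfl
      have hl : (s.left : Equiv.Perm X) = 1 := by
        rw [hφs, hr, map_one, mul_one] at hφ1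
        exact hφ1
      have hl' : s.left = 1 := Subtype.ext hl
      rw [← SemidirectProduct.inl_left_mul_inr_right s, hl', hr]
      simp
    · obtain ⟨Q, _, _, f, hf⟩ := hΓ s.right hr
      exact ⟨Q, ‹_›, ‹_›, f.comp SemidirectProduct.rightHom, by
        simpa [SemidirectProduct.rightHom] using hf⟩
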